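/- For every i ∈ ℤ₊, in Ĥ one has â₀ · û_i = 0 and â₀ · ū_i = 0; that is, û_i and ū_i are 0-eigenvectors of the multiplication operator ad_{â₀} : x ↦ â₀·x. -/
import Mathlib


namespace HatAlgebra

/-- Basis of the algebra `Ĥ`: vectors `â i` for `i : ℤ`, `ŝ_{0̄,j}` for `j` a positive
integer, and `ŝ_{1̄,3k}`, `ŝ_{2̄,3k}` for `k` a positive integer. -/
inductive HatB : Type
  | a : ℤ → HatB
  | s0 : ℕ+ → HatB
  | s1 : ℕ+ → HatB
  | s2 : ℕ+ → HatB
  deriving DecidableEq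

variable (F : Type*) [Field F]

/-- The underlying vector space of `Ĥ`: the free `F`-vector space on `HatB`. -/
abbrev HatH : Type _ := HatB →₀ F

/-- The basis vector `â i`. -/
noncomputable def aHat (i : ℤ) : HatH F := Finsupp.single (HatB.a i) 1

/-- The element `ŝ_{r̄,j}` of `Ĥ`, with the conventions `ŝ_{r̄,0} = 0` and
`ŝ_{1̄,j} = ŝ_{0̄,j} = ŝ_{2̄,j}` whenever `3 ∤ j`. -/
noncomputable def sHat (r : ZMod 3) (j : ℕ) : HatH F :=
  if h : j = 0 then 0
  else if h3 : 3 ∣ j then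
    if r = 0 then Finsupp.single (HatB.s0 ⟨j, Nat.pos_of_ne_zero h⟩) 1
    else if r = 1 then
      Finsupp.single (HatB.s1 ⟨j / 3,
        Nat.div_pos (Nat.le_of_dvd (Nat.pos_of_ne_zero h) h3) (by norm_num)⟩) 1
    else
      Finsupp.single (HatB.s2 ⟨j / 3,
        Nat.div_pos (Nat.le_of_dvd (Nat.pos_of_ne_zero h) h3) (by norm_num)⟩) 1
  else Finsupp.single (HatB.s0 ⟨j, Nat.pos_of_ne_zero h⟩) 1

/-- The operation `∗`: `(−1) ∗ 1̄ = −1`, `(−1) ∗ 2̄ = 1`, `0 ∗ t̄ = 0`. -/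
def hatStar (x : ℤ) (t : ZMod 3) : ℤ :=
  if x = 0 then 0 else if t = 1 then -1 else if t = 2 then 1 else 0

/-- The coefficient `(δ_{ī,r̄} − 1) ∗ (ī − r̄)` appearing in rule (Ĥ2). -/
def hatC (i r : ZMod 3) : ℤ := hatStar ((if i = r then 1 else 0) - 1) (i - r)

/-- Rule (Ĥ2): the product `â_i · ŝ_{r̄,j}`. -/
noncomputable def aMulS (i : ℤ) (r : ZMod 3) (j : ℕ) : HatH F :=
  (-2 : F) • aHat F i + (aHat F (i - (j : ℤ)) + aHat F (i + (j : ℤ))) - sHat F r j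
    - (hatC (i : ZMod 3) r : F) • (sHat F (r - 1) j - sHat F (r + 1) j)

/-- `ŝ_{0̄,n} + ŝ_{1̄,n} + ŝ_{2̄,n}`. -/
noncomputable def sSum (n : ℕ) : HatH F := sHat F 0 n + sHat F 1 n + sHat F 2 n

/-- For `r ≠ t` in `ℤ/3ℤ`, the signed sum `ŝ_{r̄,n} + ŝ_{t̄,n} − ŝ_{m̄,n}` where `m̄`
is the third residue class (appearing in rules (Ĥ5), (Ĥ6), (Ĥ7)). -/
noncomputable def sT (r t : ZMod 3) (n : ℕ) : HatH F :=
  sHat F r n + sHat F t n - sHat F (-(r + t)) n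

/-- Rules (Ĥ3)–(Ĥ7): the product `ŝ_{r̄,i} · ŝ_{t̄,j}`. -/
noncomputable def sMulS (r : ZMod 3) (i : ℕ) (t : ZMod 3) (j : ℕ) : HatH F :=
  if 3 ∣ i ∧ 3 ∣ j then
    if r = t then
      (2 : F) • (sHat F r i + sHat F r j) - (sHat F r (Nat.dist i j) + sHat F r (i + j))
    else
      (2 : F) • (sT F r t i + sT F r t j) - (sT F r t (Nat.dist i j) + sT F r t (i + j))
  else
    (2 : F) • (sHat F r i + sHat F t j) - (2 : F) • (sSum F (Nat.dist i j) + sSum F (i + j))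

/-- The product of `Ĥ` on basis vectors, given by rules (Ĥ1)–(Ĥ7) (extended
symmetrically, since the product is commutative). -/
noncomputable def mulB : HatB → HatB → HatH F
  | .a i, .a j => (-2 : F) • (aHat F i + aHat F j) + sHat F (i : ZMod 3) (i - j).natAbs
  | .a i, .s0 j => aMulS F i 0 (j : ℕ)
  | .s0 j, .a i => aMulS F i 0 (j : ℕ)
  | .a i, .s1 k => aMulS F i 1 (3 * (k : ℕ))
  | .s1 k, .a i => aMulS F i 1 (3 * (k : ℕ))
  | .a i, .s2 k => aMulS F i 2 (3 * (k : ℕ))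
  | .s2 k, .a i => aMulS F i 2 (3 * (k : ℕ))
  | .s0 i, .s0 j => sMulS F 0 (i : ℕ) 0 (j : ℕ)
  | .s0 i, .s1 k => sMulS F 0 (i : ℕ) 1 (3 * (k : ℕ))
  | .s1 k, .s0 i => sMulS F 0 (i : ℕ) 1 (3 * (k : ℕ))
  | .s0 i, .s2 k => sMulS F 0 (i : ℕ) 2 (3 * (k : ℕ))
  | .s2 k, .s0 i => sMulS F 0 (i : ℕ) 2 (3 * (k : ℕ))
  | .s1 h, .s1 k => sMulS F 1 (3 * (h : ℕ)) 1 (3 * (k : ℕ))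
  | .s1 h, .s2 k => sMulS F 1 (3 * (h : ℕ)) 2 (3 * (k : ℕ))
  | .s2 k, .s1 h => sMulS F 1 (3 * (h : ℕ)) 2 (3 * (k : ℕ))
  | .s2 h, .s2 k => sMulS F 2 (3 * (h : ℕ)) 2 (3 * (k : ℕ))

/-- The commutative bilinear product of `Ĥ`, as a bilinear map. -/
noncomputable def hatMul : HatH F →ₗ[F] HatH F →ₗ[F] HatH F :=
  Finsupp.lift (HatH F →ₗ[F] HatH F) F HatB fun x => Finsupp.lift (HatH F) F HatB (mulB F x)

/-- The product of two elements of `Ĥ`. -/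
noncomputable def hmul (x y : HatH F) : HatH F := hatMul F x y


/-- `û_i := −2â₀ + (â_i + â_{−i}) + 2ŝ_{0̄,i}`. -/
noncomputable def uHat (i : ℕ) : HatH F :=
  (-2 : F) • aHat F 0 + (aHat F (i : ℤ) + aHat F (-(i : ℤ))) + (2 : F) • sHat F 0 i

/-- `ū_i := −2â₀ + (â_{−i} + â_i) − (ŝ_{0̄,i} + ŝ_{1̄,i} + ŝ_{2̄,i})`. -/
noncomputable def ubar (i : ℕ) : HatH F :=
  (-2 : F) • aHat F 0 + (aHat F (-(i : ℤ)) + aHat F (i : ℤ))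
    - (sHat F 0 i + sHat F 1 i + sHat F 2 i)


lemma sHat_zero (r : ZMod 3) : sHat F r 0 = 0 := dif_pos rfl

lemma hatMul_single_single (x y : HatB) :
    hatMul F (Finsupp.single x (1 : F)) (Finsupp.single y (1 : F)) = mulB F x y := by
  simp [hatMul, Finsupp.lift_apply, Finsupp.sum_single_index]

lemma key_a (j : ℤ) :
    hatMul F (aHat F 0) (aHat F j)
      = (-2 : F) • (aHat F 0 + aHat F j) + sHat F 0 j.natAbs := by
  rw [aHat, aHat, hatMul_single_single, mulB]
  norm_num [aHat]

lemma aMulS_zero (r : ZMod 3) : aMulS F 0 r 0 = 0 := by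
  simp only [aMulS, sHat_zero, Nat.cast_zero, sub_zero, add_zero, sub_self, smul_zero]
  module

lemma sHat_not_dvd (r : ZMod 3) {j : ℕ} (h : ¬ 3 ∣ j) : sHat F r j = sHat F 0 j := by
  have hj : j ≠ 0 := by rintro rfl; exact h ⟨0, rfl⟩
  rw [sHat, sHat, dif_neg hj, dif_neg hj, dif_neg h, dif_neg h]

lemma key_s (r : ZMod 3) (j : ℕ) :
    hatMul F (aHat F 0) (sHat F r j) = aMulS F 0 r j := by
  by_cases hj : j = 0
  · subst hj; rw [sHat_zero, map_zero, aMulS_zero]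
  by_cases h3 : (3 : ℕ) ∣ j
  · fin_cases r
    · show hatMul F (aHat F 0) (sHat F 0 j) = aMulS F 0 0 j
      rw [show sHat F 0 j = Finsupp.single (HatB.s0 ⟨j, Nat.pos_of_ne_zero hj⟩) 1 by
        rw [sHat, dif_neg hj, dif_pos h3, if_pos rfl]]
      rw [aHat, hatMul_single_single]
      show aMulS F 0 0 ((⟨j, _⟩ : ℕ+) : ℕ) = aMulS F 0 0 j
      rfl
    · show hatMul F (aHat F 0) (sHat F 1 j) = aMulS F 0 1 j
      rw [show sHat F 1 j = Finsupp.single (HatB.s1 ⟨j / 3,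
          Nat.div_pos (Nat.le_of_dvd (Nat.pos_of_ne_zero hj) h3) (by norm_num)⟩) 1 by
        rw [sHat, dif_neg hj, dif_pos h3, if_neg (by decide), if_pos rfl]]
      rw [aHat, hatMul_single_single]
      show aMulS F 0 1 (3 * (j / 3)) = aMulS F 0 1 j
      rw [Nat.mul_div_cancel' h3]
    · show hatMul F (aHat F 0) (sHat F 2 j) = aMulS F 0 2 j
      rw [show sHat F 2 j = Finsupp.single (HatB.s2 ⟨j / 3,
          Nat.div_pos (Nat.le_of_dvd (Nat.pos_of_ne_zero hj) h3) (by norm_num)⟩) 1 by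
        rw [sHat, dif_neg hj, dif_pos h3, if_neg (by decide), if_neg (by decide)]]
      rw [aHat, hatMul_single_single]
      show aMulS F 0 2 (3 * (j / 3)) = aMulS F 0 2 j
      rw [Nat.mul_div_cancel' h3]
  · rw [sHat_not_dvd F r h3,
      show sHat F 0 j = Finsupp.single (HatB.s0 ⟨j, Nat.pos_of_ne_zero hj⟩) 1 by
        rw [sHat, dif_neg hj, dif_neg h3]]
    rw [aHat, hatMul_single_single]
    show aMulS F 0 0 ((⟨j, _⟩ : ℕ+) : ℕ) = aMulS F 0 r j
    have hcoe : ((⟨j, Nat.pos_of_ne_zero hj⟩ : ℕ+) : ℕ) = j := rfl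
    rw [hcoe, aMulS, aMulS, sHat_not_dvd F r h3, sHat_not_dvd F (r - 1) h3,
      sHat_not_dvd F (r + 1) h3, sHat_not_dvd F (0 - 1) h3, sHat_not_dvd F (0 + 1) h3]
    simp

/-- For every `i ∈ ℤ₊`, `û_i` and `ū_i` are `0`-eigenvectors of `ad_{â₀}`. -/
theorem uHat_zero_eigenvector [CharP F 5] (i : ℕ) (hi : 0 < i) :
    hmul F (aHat F 0) (uHat F i) = 0 ∧ hmul F (aHat F 0) (ubar F i) = 0 := by
  have h5 : (5 : F) = 0 := by exact_mod_cast CharP.cast_eq_zero F 5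
  have hC0 : hatC 0 0 = 0 := by decide
  have hC1 : hatC 0 1 = 1 := by decide
  have hC2 : hatC 0 2 = -1 := by decide
  constructor
  · show hatMul F (aHat F 0) (uHat F i) = 0
    rw [uHat, map_add, map_add, map_add, map_smul, map_smul, key_a, key_a, key_a, key_s]
    simp only [Int.natAbs_zero, Int.natAbs_neg, Int.natAbs_natCast, sHat_zero, aMulS,
      Int.cast_zero, hC0, Int.cast_zero, zero_smul, zero_sub, zero_add, add_zero, sub_zero]
    module
  · show hatMul F (aHat F 0) (ubar F i) = 0
    rw [ubar]
    simp only [map_sub, map_add, map_smul, key_a, key_s]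
    simp only [Int.natAbs_zero, Int.natAbs_neg, Int.natAbs_natCast, sHat_zero, aMulS,
      Int.cast_zero, hC0, hC1, hC2, zero_smul, zero_sub, zero_add, add_zero, sub_zero,
      Int.cast_one, Int.cast_neg, one_smul, neg_smul,
      show (0 : ZMod 3) - 1 = 2 from rfl, show (0 : ZMod 3) + 1 = 1 from rfl,
      show (1 : ZMod 3) - 1 = 0 from rfl, show (1 : ZMod 3) + 1 = 2 from rfl,
      show (2 : ZMod 3) - 1 = 1 from rfl, show (2 : ZMod 3) + 1 = 0 from rfl]
    match_scalars <;>
      (first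
        | ring1
        | linear_combination h5
        | linear_combination -h5
        | linear_combination 2 * h5
        | linear_combination -2 * h5)


end HatAlgebra
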